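/- (Corollary, existence of ω̄.) Assume a₁ < 0, 0 > b₀ > −a₀ (so a₀ > |b₀|), τ̄ ≥ 0 with a₂ > |b₀|τ̄²/2, and g(τ̄) < 0. Then there exists ω̄ > 0 such that W_r(ω̄) < 0 and W_i(ω) > 0 for all ω ∈ (0, ω̄). -/

import Mathlib

/-- Auxiliary: `sin x ≥ x - x^3/6` for `x ≥ 0`. -/
lemma sin_ge_sub_cube_six {x : ℝ} (hx : 0 ≤ x) : x - x ^ 3 / 6 ≤ Real.sin x := by
  have key : ∀ y : ℝ, 0 ≤ y → y - y ^ 3 / 6 ≤ Real.sin y := by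
    intro y hy
    have hmono : MonotoneOn (fun t : ℝ => Real.sin t - t + t ^ 3 / 6) (Set.Ici 0) := by
      apply monotoneOn_of_deriv_nonneg (convex_Ici 0)
      · exact ((Real.continuous_sin.sub continuous_id).add
          ((continuous_pow 3).div_const 6)).continuousOn
      · intro t _
        exact ((Real.differentiable_sin.sub differentiable_id).add
          ((differentiable_pow 3).div_const 6)) t |>.differentiableWithinAt
      · intro t _
        have hd : HasDerivAt (fun t : ℝ => Real.sin t - t + t ^ 3 / 6)
            (Real.cos t - 1 + 3 * t ^ 2 / 6) t := by
          have h1 := (Real.hasDerivAt_sin t).sub (hasDerivAt_id t)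
          have h2 := ((hasDerivAt_pow 3 t).div_const 6)
          exact (h1.add h2).congr_deriv (by norm_num)
        rw [interior_Ici] at *
        rw [hd.deriv]
        have := Real.one_sub_sq_div_two_le_cos (x := t)
        nlinarith
    have h0 : (fun t : ℝ => Real.sin t - t + t ^ 3 / 6) 0 ≤
        (fun t : ℝ => Real.sin t - t + t ^ 3 / 6) y :=
      hmono (Set.self_mem_Ici) (Set.mem_Ici.2 hy) hy
    simp only [Real.sin_zero] at h0
    nlinarith [h0]
  exact key x hx

/-- Corollary, existence of ω̄: Under the stated conditions there
exists ω̄ > 0 with W_r(ω̄) < 0 and W_i(ω) > 0 for all ω ∈ (0, ω̄). -/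
theorem exists_omega_bar (a₀ a₁ a₂ b₀ τbar : ℝ)
    (ha₁ : a₁ < 0) (hb : b₀ < 0) (hba : -a₀ < b₀)
    (hτ : 0 ≤ τbar) (ha₂ : |b₀| * τbar ^ 2 / 2 < a₂)
    (Wr Wi g : ℝ → ℝ)
    (hWr : Wr = fun ω : ℝ => -a₂ * ω ^ 2 + a₀ + b₀ * Real.cos (ω * τbar))
    (hWi : Wi = fun ω : ℝ => -ω ^ 3 + a₁ * ω - b₀ * Real.sin (ω * τbar))
    (hg : g = fun t : ℝ => ((a₀ + 2 * |b₀|) / 6) * t ^ 3 - (|a₁| / 2) * t ^ 2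
      - a₂ * t + (|a₁| * a₂ + a₀ - |b₀|) / |b₀|)
    (hgτ : g τbar < 0) :
    ∃ ωbar : ℝ, 0 < ωbar ∧ Wr ωbar < 0 ∧
      ∀ ω : ℝ, 0 < ω → ω < ωbar → 0 < Wi ω := by
  have hab : |b₀| = -b₀ := abs_of_neg hb
  have haa : |a₁| = -a₁ := abs_of_neg ha₁
  rw [hab] at ha₂
  rw [hab, haa] at hg
  set A : ℝ := -b₀ * τbar + a₁ with hA
  set B : ℝ := 1 + (-b₀) * τbar ^ 3 / 6 with hB
  set C : ℝ := a₀ + b₀ with hC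
  set D : ℝ := a₂ + b₀ * τbar ^ 2 / 2 with hD
  have hbpos : 0 < -b₀ := by linarith
  have hCpos : 0 < C := by simp only [hC]; linarith
  have hDpos : 0 < D := by simp only [hD]; linarith
  have hBpos : 0 < B := by
    have : 0 ≤ -b₀ * τbar ^ 3 / 6 := by positivity
    simp only [hB]; linarith
  -- key inequality: C * B < A * D
  have hkey : C * B < A * D := by
    have hgv : g τbar = ((a₀ + 2 * (-b₀)) / 6) * τbar ^ 3 - ((-a₁) / 2) * τbar ^ 2
        - a₂ * τbar + ((-a₁) * a₂ + a₀ - (-b₀)) / (-b₀) := by rw [hg]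
    have hmul : (-b₀) * g τbar < 0 := mul_neg_of_pos_of_neg hbpos hgτ
    have hb0 : b₀ ≠ 0 := hb.ne
    have hident : (-b₀) * g τbar = C * B - A * D := by
      rw [hgv]
      simp only [hA, hB, hC, hD]
      field_simp
      ring
    linarith [hident ▸ hmul]
  have hApos : 0 < A := by
    by_contra h
    push_neg at h
    have : A * D ≤ 0 := mul_nonpos_of_nonpos_of_nonneg h hDpos.le
    nlinarith
  set w : ℝ := Real.sqrt (A / B) with hw
  have hADB : 0 < A / B := div_pos hApos hBpos
  have hwpos : 0 < w := Real.sqrt_pos.2 hADB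
  have hwsq : w ^ 2 = A / B := Real.sq_sqrt hADB.le
  refine ⟨w, hwpos, ?_, ?_⟩
  · -- Wr w < 0
    rw [hWr]
    have hcos : 1 - (w * τbar) ^ 2 / 2 ≤ Real.cos (w * τbar) :=
      Real.one_sub_sq_div_two_le_cos
    have hbcos : b₀ * Real.cos (w * τbar) ≤ b₀ * (1 - (w * τbar) ^ 2 / 2) := by
      nlinarith [hcos]
    have h1 : -a₂ * w ^ 2 + a₀ + b₀ * Real.cos (w * τbar)
        ≤ C - D * w ^ 2 := by
      simp only [hC, hD]; nlinarith [hbcos]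
    have h2 : C - D * w ^ 2 < 0 := by
      rw [hwsq]
      have h3 : C < A * D / B := (lt_div_iff₀ hBpos).2 hkey
      have h4 : D * (A / B) = A * D / B := by ring
      rw [h4]; linarith
    simpa using lt_of_le_of_lt h1 h2
  · intro ω hω hωw
    rw [hWi]
    have hsin : ω * τbar - (ω * τbar) ^ 3 / 6 ≤ Real.sin (ω * τbar) :=
      sin_ge_sub_cube_six (by positivity)
    have hbs : (-b₀) * (ω * τbar - (ω * τbar) ^ 3 / 6) ≤ (-b₀) * Real.sin (ω * τbar) :=
      mul_le_mul_of_nonneg_left hsin hbpos.le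
    have hlow : ω * A - ω ^ 3 * B ≤ -ω ^ 3 + a₁ * ω - b₀ * Real.sin (ω * τbar) := by
      have heq : ω * A - ω ^ 3 * B
          = -ω ^ 3 + a₁ * ω + (-b₀) * (ω * τbar - (ω * τbar) ^ 3 / 6) := by
        simp only [hA, hB]; ring
      rw [heq]; linarith [hbs]
    have hsq : ω ^ 2 < A / B := hwsq ▸ pow_lt_pow_left₀ hωw hω.le two_ne_zero
    have h4 : ω ^ 2 * B < A := (lt_div_iff₀ hBpos).1 hsq
    have h5 : ω * (ω ^ 2 * B) < ω * A := mul_lt_mul_of_pos_left h4 hω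
    have : ω ^ 3 * B < ω * A := by
      calc ω ^ 3 * B = ω * (ω ^ 2 * B) := by ring
        _ < ω * A := h5
    simpa using lt_of_lt_of_le (by linarith : (0:ℝ) < ω * A - ω ^ 3 * B) hlow
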